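/- Let 0 < δ < 1, let v = (1−δ) Σ_{t=0}^∞ δ^t v(0) M^t be the discounted mean distribution of the full chain, and let ν = (1−δ) Σ_{t=0}^∞ δ^t ν(0) (M'')^t be the discounted mean distribution of the m-strategy reduced chain. Then for every A ∈ {C,D} and every tuple (x_1,…,x_m) with x_i ∈ {0,…,k_i}: ν_{(A,x_1,…,x_m)} = Σ_{h ∈ A_{A,x_1,…,x_m}} v_h. -/

import Mathlib

open Finset Matrix
open scoped Classical

noncomputable section

/-- A memory-1 strategy: an initial cooperation probability `init` and conditional
cooperation probabilities `cond A j`: the probability to cooperate in the next round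
when one's own action in the current round was `A` (`true` = cooperate) and exactly
`j` co-players cooperated. -/
structure Mem1 where
  init : ℝ
  cond : Bool → ℕ → ℝ

/-- All entries of the strategy lie in `[0,1]`. -/
def Mem1.valid (p : Mem1) : Prop :=
  p.init ∈ Set.Icc (0:ℝ) 1 ∧ ∀ A j, p.cond A j ∈ Set.Icc (0:ℝ) 1

/-- A full state: the action of each of the `n` players (`true` = cooperate). -/
abbrev FullState (n : ℕ) := Fin n → Bool

/-- The number of cooperators `σ(h)` in a full state. -/
def nCoop {n : ℕ} (h : FullState n) : ℕ :=
  (Finset.univ.filter fun i => h i = true).card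

/-- The full transition matrix `M` on the `2^n` full states, given each player's
memory-1 strategy: `m_{h,h'} = ∏ i u_i`, where `u_i` is player `i`'s probability of
choosing action `h' i` given that in state `h` his action was `h i` and
`σ(h) - f(h i)` of his co-players cooperated. -/
def fullM {n : ℕ} (strat : Fin n → Mem1) : Matrix (FullState n) (FullState n) ℝ :=
  Matrix.of fun h h' => ∏ i,
    (if h' i then (strat i).cond (h i) (nCoop h - if h i then 1 else 0)
     else 1 - (strat i).cond (h i) (nCoop h - if h i then 1 else 0))

/-- The initial full-state distribution `v(0)`: each player cooperates independently
with the initial probability of his own strategy, `v(0)_h = ∏ i |1 - f(A_i) - p^i_0|`. -/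
def fullInit {n : ℕ} (strat : Fin n → Mem1) : FullState n → ℝ :=
  fun h => ∏ i, |1 - (if h i then (1:ℝ) else 0) - (strat i).init|

/-- Binomial transfer factor: for a block of `tot` co-players of one strategy of which
`x` cooperated in the last round, the probability that exactly `x'` of them cooperate
in the next round, where previous cooperators cooperate with probability `pc` and
previous defectors with probability `pd`:
`Σ_{j=0}^{x'} C(x,j) pc^j (1-pc)^{x-j} C(tot-x, x'-j) pd^{x'-j} (1-pd)^{(tot-x)-(x'-j)}`. -/
def transfer (pc pd : ℝ) (x tot x' : ℕ) : ℝ :=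
  ∑ j ∈ Finset.range (x' + 1),
    (x.choose j : ℝ) * pc ^ j * (1 - pc) ^ (x - j) *
    ((tot - x).choose (x' - j) : ℝ) * pd ^ (x' - j) * (1 - pd) ^ ((tot - x) - (x' - j))

/-- The discounted mean distribution `(1-δ) Σ_{t=0}^∞ δ^t (w₀ T^t)`. -/
def discMean {α : Type*} [Fintype α] [DecidableEq α]
    (δ : ℝ) (w0 : α → ℝ) (T : Matrix α α ℝ) : α → ℝ :=
  fun j => (1 - δ) * ∑' t : ℕ, δ ^ t * (w0 ᵥ* T ^ t) j

/-- The focal player's one-round payoff in full state `h`: `a_{σ(h)-1}` if he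
cooperates, `b_{σ(h)}` if he defects. -/
def focalPayoff {n : ℕ} (focal : Fin n) (a b : ℕ → ℝ) (h : FullState n) : ℝ :=
  if h focal then a (nCoop h - 1) else b (nCoop h)

/-- Strategy assignment for `m` strategies: player `i` uses strategy `ps (assign i)`. -/
def stratM {n m : ℕ} (ps : Fin m → Mem1) (assign : Fin n → Fin m) : Fin n → Mem1 :=
  fun i => ps (assign i)

/-- The clustered state space for `m` strategies: the focal action together with, for
each strategy index `i`, the number `x i ∈ {0,…,k_i}` of cooperators among the `k_i`
co-players using strategy `i`. -/
abbrev RStateM {m : ℕ} (ks : Fin m → ℕ) := Bool × ((i : Fin m) → Fin (ks i + 1))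

/-- The cluster `A_{A,x_1,…,x_m}`: full states in which the focal player plays `A` and,
for every `i`, exactly `x i` of the co-players using strategy `i` cooperate. -/
def clusterM {n m : ℕ} (focal : Fin n) (assign : Fin n → Fin m) (ks : Fin m → ℕ)
    (A : Bool) (x : (i : Fin m) → Fin (ks i + 1)) : Finset (FullState n) :=
  Finset.univ.filter fun h =>
    h focal = A ∧
    ∀ i, (Finset.univ.filter fun j => j ≠ focal ∧ assign j = i ∧ h j = true).card = (x i : ℕ)

/-- The `m`-strategy reduced transition matrix `M''` on the `2 ∏ (k_i+1)` clustered
states, for a focal player using strategy `ps i0`. -/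
def redMM {m : ℕ} (ps : Fin m → Mem1) (ks : Fin m → ℕ) (i0 : Fin m) :
    Matrix (RStateM ks) (RStateM ks) ℝ :=
  Matrix.of fun s s' =>
    match s, s' with
    | (A, x), (A', x') =>
      |1 - (if A' then (1:ℝ) else 0) - (ps i0).cond A (∑ i, (x i : ℕ))| *
      ∏ i, transfer ((ps i).cond true ((∑ i', (x i' : ℕ)) + (if A then 1 else 0) - 1))
                    ((ps i).cond false ((∑ i', (x i' : ℕ)) + (if A then 1 else 0)))
                    (x i : ℕ) (ks i) (x' i : ℕ)

/-- The initial clustered distribution `ν(0)` for `m` strategies. -/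
def redInitM {m : ℕ} (ps : Fin m → Mem1) (ks : Fin m → ℕ) (i0 : Fin m) :
    RStateM ks → ℝ :=
  fun s => match s with
  | (A, x) =>
    |1 - (if A then (1:ℝ) else 0) - (ps i0).init| *
    ∏ i, (((ks i).choose (x i : ℕ) : ℝ) * (ps i).init ^ (x i : ℕ) *
          (1 - (ps i).init) ^ (ks i - (x i : ℕ)))


/-! ### Auxiliary combinatorial lemmas -/

section Comb
variable {ι : Type*} [DecidableEq ι]

lemma aux_prod_ite_inter (C T : Finset ι) (a b : ℝ) :
    (∏ j ∈ C, if j ∈ T then a else b) = a ^ (C ∩ T).card * b ^ (C.card - (C ∩ T).card) := by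
  rw [Finset.prod_ite, Finset.prod_const, Finset.prod_const]
  have h1 : C.filter (· ∈ T) = C ∩ T := Finset.filter_mem_eq_inter
  have h2 := Finset.card_filter_add_card_filter_not (s := C) (p := (· ∈ T))
  rw [h1] at h2 ⊢
  congr 2
  omega

lemma aux_hom_sum (s : Finset ι) (a b : ℝ) (r : ℕ) :
    ∑ T ∈ s.powersetCard r, (∏ j ∈ s, if j ∈ T then a else b)
      = (s.card.choose r : ℝ) * a ^ r * b ^ (s.card - r) := by
  have h1 : ∀ T ∈ s.powersetCard r,
      (∏ j ∈ s, if j ∈ T then a else b) = a ^ r * b ^ (s.card - r) := by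
    intro T hT
    obtain ⟨hTs, hTc⟩ := Finset.mem_powersetCard.mp hT
    rw [aux_prod_ite_inter, Finset.inter_eq_right.mpr hTs, hTc]
  rw [Finset.sum_congr rfl h1, Finset.sum_const, Finset.card_powersetCard, nsmul_eq_mul, mul_assoc]

lemma aux_block_sum (s : Finset ι) (g : ι → Bool) (pc pd : ℝ) (x' : ℕ) :
    ∑ T ∈ s.powersetCard x',
        (∏ j ∈ s, if j ∈ T then (if g j then pc else pd) else (1 - if g j then pc else pd))
      = transfer pc pd (s.filter fun j => g j = true).card s.card x' := by
  classical
  set C := s.filter (fun j => g j = true) with hC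
  set D := s.filter (fun j => ¬ g j = true) with hD
  have hCD : Disjoint C D := Finset.disjoint_filter_filter_not s s _
  have hsum : C.card + D.card = s.card := by
    have := Finset.card_filter_add_card_filter_not (s := s) (p := fun j => g j = true)
    simpa [hC, hD] using this
  have hDcard : D.card = s.card - C.card := by omega
  have hTsplit : ∀ T ⊆ s, (C ∩ T) ∪ (D ∩ T) = T := by
    intro T hT
    ext j
    simp only [Finset.mem_union, Finset.mem_inter, hC, hD, Finset.mem_filter]
    constructor
    · tauto
    · intro hj
      have := hT hj
      by_cases hg : g j = true <;> tauto
  have hTcard : ∀ T ∈ s.powersetCard x', (C ∩ T).card + (D ∩ T).card = x' := by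
    intro T hT
    obtain ⟨hTs, hTc⟩ := Finset.mem_powersetCard.mp hT
    rw [← hTc]
    conv_rhs => rw [← hTsplit T hTs]
    exact (Finset.card_union_of_disjoint
      (hCD.mono Finset.inter_subset_left Finset.inter_subset_left)).symm
  have hdisj : ∀ j, j ∈ D → j ∉ C := fun j hj hjC => (Finset.disjoint_left.mp hCD hjC hj)
  have hterm : ∀ T ∈ s.powersetCard x',
      (∏ j ∈ s, if j ∈ T then (if g j then pc else pd) else (1 - if g j then pc else pd))
        = (pc ^ (C ∩ T).card * (1 - pc) ^ (C.card - (C ∩ T).card))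
          * (pd ^ (D ∩ T).card * (1 - pd) ^ (D.card - (D ∩ T).card)) := by
    intro T hT
    rw [← Finset.prod_filter_mul_prod_filter_not s (fun j => g j = true)]
    congr 1
    · rw [show (∏ j ∈ C, if j ∈ T then (if g j then pc else pd) else (1 - if g j then pc else pd))
            = ∏ j ∈ C, if j ∈ T then pc else (1 - pc) from
        Finset.prod_congr rfl (fun j hj => by
          have : g j = true := (Finset.mem_filter.mp hj).2
          simp [this])]
      exact aux_prod_ite_inter C T pc (1 - pc)
    · rw [show (∏ j ∈ D, if j ∈ T then (if g j then pc else pd) else (1 - if g j then pc else pd))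
            = ∏ j ∈ D, if j ∈ T then pd else (1 - pd) from
        Finset.prod_congr rfl (fun j hj => by
          have : ¬ g j = true := (Finset.mem_filter.mp hj).2
          simp [this])]
      exact aux_prod_ite_inter D T pd (1 - pd)
  have hmaps : ∀ T ∈ s.powersetCard x', (C ∩ T).card ∈ Finset.range (x' + 1) := by
    intro T hT
    have := hTcard T hT
    simp only [Finset.mem_range]
    omega
  rw [← Finset.sum_fiberwise_of_maps_to hmaps]
  unfold transfer
  refine Finset.sum_congr rfl fun j hj => ?_
  have hjx : j ≤ x' := by simpa [Nat.lt_succ_iff] using hj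
  have hCP : ∀ P1 P2 : Finset ι, P1 ⊆ C → P2 ⊆ D →
      C ∩ (P1 ∪ P2) = P1 ∧ D ∩ (P1 ∪ P2) = P2 := by
    intro P1 P2 h1 h2
    constructor <;> ext a <;>
      simp only [Finset.mem_inter, Finset.mem_union] <;>
      constructor
    · rintro ⟨haC, haP1 | haP2⟩
      · exact haP1
      · exact absurd haC (hdisj a (h2 haP2))
    · intro ha; exact ⟨h1 ha, Or.inl ha⟩
    · rintro ⟨haD, haP1 | haP2⟩
      · exact absurd (h1 haP1) (hdisj a haD)
      · exact haP2
    · intro ha; exact ⟨h2 ha, Or.inr ha⟩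
  have hfibval : ∀ T ∈ (s.powersetCard x').filter (fun T => (C ∩ T).card = j),
      (∏ j ∈ s, if j ∈ T then (if g j then pc else pd) else (1 - if g j then pc else pd))
        = (pc ^ j * (1 - pc) ^ (C.card - j)) * (pd ^ (x' - j) * (1 - pd) ^ (D.card - (x' - j))) := by
    intro T hT
    obtain ⟨hT1, hT2⟩ := Finset.mem_filter.mp hT
    have h3 := hTcard T hT1
    have hD2 : (D ∩ T).card = x' - j := by omega
    rw [hterm T hT1, hT2, hD2]
  have hfibcard : ((s.powersetCard x').filter (fun T => (C ∩ T).card = j)).card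
      = (C.powersetCard j ×ˢ D.powersetCard (x' - j)).card := by
    refine Finset.card_nbij' (fun T => (C ∩ T, D ∩ T)) (fun P => P.1 ∪ P.2) ?_ ?_ ?_ ?_
    · intro T hT
      obtain ⟨hT1, hT2⟩ := Finset.mem_filter.mp hT
      have h3 := hTcard T hT1
      simp only [Finset.mem_coe, Finset.mem_product, Finset.mem_powersetCard]
      exact ⟨⟨Finset.inter_subset_left, hT2⟩, ⟨Finset.inter_subset_left, by omega⟩⟩
    · intro P hP
      simp only [Finset.mem_coe, Finset.mem_product, Finset.mem_powersetCard] at hP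
      obtain ⟨⟨h1s, h1c⟩, ⟨h2s, h2c⟩⟩ := hP
      have hPC := hCP P.1 P.2 h1s h2s
      refine Finset.mem_filter.mpr ⟨Finset.mem_powersetCard.mpr ⟨?_, ?_⟩, ?_⟩
      · exact Finset.union_subset (h1s.trans (Finset.filter_subset _ s))
          (h2s.trans (Finset.filter_subset _ s))
      · rw [Finset.card_union_of_disjoint (hCD.mono h1s h2s), h1c, h2c]
        omega
      · rw [hPC.1, h1c]
    · intro T hT
      obtain ⟨hT1, _⟩ := Finset.mem_filter.mp hT
      exact hTsplit T (Finset.mem_powersetCard.mp hT1).1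
    · intro P hP
      simp only [Finset.mem_coe, Finset.mem_product, Finset.mem_powersetCard] at hP
      have hPC := hCP P.1 P.2 hP.1.1 hP.2.1
      simp only []
      rw [Prod.ext_iff]
      exact ⟨hPC.1, hPC.2⟩
  rw [Finset.sum_congr rfl hfibval, Finset.sum_const, hfibcard, Finset.card_product,
    Finset.card_powersetCard, Finset.card_powersetCard, nsmul_eq_mul, hDcard]
  push_cast
  ring

end Comb

/-! ### Cluster machinery -/

section Cluster

variable {n m : ℕ}

/-- The block of co-players assigned to strategy `i`. -/
def blk (focal : Fin n) (assign : Fin n → Fin m) (i : Fin m) : Finset (Fin n) :=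
  Finset.univ.filter fun j => j ≠ focal ∧ assign j = i

lemma blk_filter (focal : Fin n) (assign : Fin n → Fin m) (i : Fin m) (h : FullState n) :
    (Finset.univ.filter fun j => j ≠ focal ∧ assign j = i ∧ h j = true)
      = (blk focal assign i).filter (fun j => h j = true) := by
  ext j; simp only [blk, Finset.mem_filter, Finset.mem_univ, true_and]; tauto

lemma mem_blk {focal : Fin n} {assign : Fin n → Fin m} {i : Fin m} {j : Fin n} :
    j ∈ blk focal assign i ↔ j ≠ focal ∧ assign j = i := by
  simp [blk]

lemma mem_clusterM {focal : Fin n} {assign : Fin n → Fin m} {ks : Fin m → ℕ}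
    {A : Bool} {x : (i : Fin m) → Fin (ks i + 1)} {h : FullState n} :
    h ∈ clusterM focal assign ks A x ↔
      h focal = A ∧
        ∀ i, ((blk focal assign i).filter (fun j => h j = true)).card = (x i : ℕ) := by
  simp only [clusterM, Finset.mem_filter, Finset.mem_univ, true_and,
    blk_filter focal assign]

lemma prod_split (focal : Fin n) (assign : Fin n → Fin m) (F : Fin n → ℝ) :
    ∏ j, F j = F focal * ∏ i, ∏ j ∈ blk focal assign i, F j := by
  rw [← Finset.mul_prod_erase Finset.univ F (Finset.mem_univ focal)]
  congr 1
  rw [← Finset.prod_fiberwise_of_maps_to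
    (g := assign) (t := Finset.univ) (s := Finset.univ.erase focal)
    (fun j _ => Finset.mem_univ _) F]
  refine Finset.prod_congr rfl fun i _ => Finset.prod_congr ?_ fun _ _ => rfl
  ext j
  simp only [Finset.mem_filter, Finset.mem_erase, Finset.mem_univ, true_and, mem_blk, blk,
    and_comm]

lemma sum_split (focal : Fin n) (assign : Fin n → Fin m) (F : Fin n → ℕ) :
    ∑ j, F j = F focal + ∑ i, ∑ j ∈ blk focal assign i, F j := by
  rw [← Finset.add_sum_erase Finset.univ F (Finset.mem_univ focal)]
  congr 1
  rw [← Finset.sum_fiberwise_of_maps_to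
    (g := assign) (t := Finset.univ) (s := Finset.univ.erase focal)
    (fun j _ => Finset.mem_univ _) F]
  refine Finset.sum_congr rfl fun i _ => Finset.sum_congr ?_ fun _ _ => rfl
  ext j
  simp only [Finset.mem_filter, Finset.mem_erase, Finset.mem_univ, true_and, mem_blk, blk,
    and_comm]

lemma nCoop_cluster {focal : Fin n} {assign : Fin n → Fin m} {ks : Fin m → ℕ}
    {A : Bool} {x : (i : Fin m) → Fin (ks i + 1)} {h : FullState n}
    (hh : h ∈ clusterM focal assign ks A x) :
    nCoop h = (∑ i, (x i : ℕ)) + (if A then 1 else 0) := by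
  obtain ⟨hfoc, hcnt⟩ := mem_clusterM.mp hh
  have h1 : nCoop h = ∑ j, (if h j then 1 else 0) := by
    rw [nCoop, Finset.card_filter]
  rw [h1, sum_split focal assign]
  have h2 : ∀ i : Fin m, (∑ j ∈ blk focal assign i, if h j then 1 else 0) = (x i : ℕ) := by
    intro i
    rw [← Finset.card_filter, hcnt i]
  rw [Finset.sum_congr rfl (fun i _ => h2 i), hfoc, add_comm]

/-- classification map sending a full state to its cluster label -/
def classify (focal : Fin n) (assign : Fin n → Fin m) (ks : Fin m → ℕ)
    (hcard : ∀ i, (blk focal assign i).card = ks i) (h : FullState n) : RStateM ks :=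
  (h focal, fun i => ⟨((blk focal assign i).filter (fun j => h j = true)).card,
    Nat.lt_succ_of_le (le_trans (Finset.card_filter_le _ _) (le_of_eq (hcard i)))⟩)

lemma cluster_eq_fiber {focal : Fin n} {assign : Fin n → Fin m} {ks : Fin m → ℕ}
    (hcard : ∀ i, (blk focal assign i).card = ks i)
    (s : RStateM ks) :
    clusterM focal assign ks s.1 s.2
      = Finset.univ.filter (fun h => classify focal assign ks hcard h = s) := by
  ext h
  rw [mem_clusterM]
  simp only [Finset.mem_filter, Finset.mem_univ, true_and, classify, Prod.ext_iff,
    funext_iff, Fin.ext_iff]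

lemma sum_clusters {focal : Fin n} {assign : Fin n → Fin m} {ks : Fin m → ℕ}
    (hcard : ∀ i, (blk focal assign i).card = ks i)
    (G : FullState n → ℝ) :
    ∑ s : RStateM ks, ∑ h ∈ clusterM focal assign ks s.1 s.2, G h = ∑ h, G h := by
  rw [Finset.sum_congr rfl (fun s _ => by rw [cluster_eq_fiber hcard s])]
  exact Finset.sum_fiberwise_of_maps_to (fun h _ => Finset.mem_univ _) G

lemma cluster_sum (focal : Fin n) (assign : Fin n → Fin m) (ks : Fin m → ℕ)
    (A : Bool) (x : (i : Fin m) → Fin (ks i + 1)) (c : Bool → ℝ) (q : Fin n → Bool → ℝ) :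
    ∑ h ∈ clusterM focal assign ks A x,
        (c (h focal) * ∏ i, ∏ j ∈ blk focal assign i, q j (h j))
      = c A * ∏ i, ∑ T ∈ (blk focal assign i).powersetCard (x i : ℕ),
          ∏ j ∈ blk focal assign i, (if j ∈ T then q j true else q j false) := by
  rw [Finset.prod_univ_sum, Finset.mul_sum]
  refine Finset.sum_nbij' (fun h i => (blk focal assign i).filter (fun j => h j = true))
    (fun f j => if j = focal then A else decide (j ∈ f (assign j))) ?_ ?_ ?_ ?_ ?_
  · intro h hh
    obtain ⟨hfoc, hcnt⟩ := mem_clusterM.mp hh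
    rw [Fintype.mem_piFinset]
    intro i
    exact Finset.mem_powersetCard.mpr ⟨Finset.filter_subset _ _, hcnt i⟩
  · intro f hf
    rw [Fintype.mem_piFinset] at hf
    have hfsub : ∀ i, f i ⊆ blk focal assign i :=
      fun i => (Finset.mem_powersetCard.mp (hf i)).1
    have hkey : ∀ i, (blk focal assign i).filter
        (fun j => (if j = focal then A else decide (j ∈ f (assign j))) = true) = f i := by
      intro i
      ext j
      simp only [Finset.mem_filter, mem_blk]
      constructor
      · rintro ⟨⟨hjf, hja⟩, hj2⟩
        rw [if_neg hjf, decide_eq_true_eq, hja] at hj2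
        exact hj2
      · intro hj
        have hjb := hfsub i hj
        rw [mem_blk] at hjb
        refine ⟨hjb, ?_⟩
        rw [if_neg hjb.1, hjb.2, decide_eq_true_eq]
        exact hj
    rw [mem_clusterM]
    refine ⟨by simp, fun i => ?_⟩
    rw [hkey i]
    exact (Finset.mem_powersetCard.mp (hf i)).2
  · intro h hh
    obtain ⟨hfoc, _⟩ := mem_clusterM.mp hh
    funext j
    by_cases hj : j = focal
    · subst hj; simp [hfoc]
    · simp only [if_neg hj, Finset.mem_filter, mem_blk]
      by_cases hhj : h j = true
      · simp [hhj, hj]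
      · simp [hhj, hj]
  · intro f hf
    rw [Fintype.mem_piFinset] at hf
    have hfsub : ∀ i, f i ⊆ blk focal assign i :=
      fun i => (Finset.mem_powersetCard.mp (hf i)).1
    funext i
    ext j
    simp only [Finset.mem_filter, mem_blk]
    constructor
    · rintro ⟨⟨hjf, hja⟩, hj2⟩
      rw [if_neg hjf, decide_eq_true_eq, hja] at hj2
      exact hj2
    · intro hj
      have hjb := hfsub i hj
      rw [mem_blk] at hjb
      refine ⟨hjb, ?_⟩
      rw [if_neg hjb.1, hjb.2, decide_eq_true_eq]
      exact hj
  · intro h hh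
    obtain ⟨hfoc, _⟩ := mem_clusterM.mp hh
    rw [hfoc]
    congr 1
    refine Finset.prod_congr rfl fun i _ => Finset.prod_congr rfl fun j hj => ?_
    have hjb := mem_blk.mp hj
    by_cases hhj : h j = true
    · rw [if_pos, hhj]
      exact Finset.mem_filter.mpr ⟨hj, hhj⟩
    · rw [if_neg, show h j = false from Bool.not_eq_true _ |>.mp hhj]
      intro hmem
      exact hhj (Finset.mem_filter.mp hmem).2

end Cluster


/-! ### Aggregation of the initial distribution and the transition matrix -/

lemma abs_one_sub_ite (b : Bool) (p : ℝ) (hp : 0 ≤ p) (hp1 : p ≤ 1) :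
    |1 - (if b then (1:ℝ) else 0) - p| = if b then p else 1 - p := by
  cases b
  · rw [if_neg (by simp), if_neg (by simp), show (1:ℝ) - 0 - p = 1 - p by ring]
    exact abs_of_nonneg (by linarith)
  · rw [if_pos rfl, if_pos rfl, show (1:ℝ) - 1 - p = -p by ring, abs_neg]
    exact abs_of_nonneg hp

lemma init_sum {n m : ℕ} (ps : Fin m → Mem1) (ks : Fin m → ℕ) (i0 : Fin m)
    (focal : Fin n) (assign : Fin n → Fin m)
    (hps : ∀ i, (ps i).valid) (hassign : assign focal = i0)
    (hcard : ∀ i, (blk focal assign i).card = ks i)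
    (A : Bool) (x : (i : Fin m) → Fin (ks i + 1)) :
    ∑ h ∈ clusterM focal assign ks A x, fullInit (stratM ps assign) h
      = redInitM ps ks i0 (A, x) := by
  have hstep : ∀ h ∈ clusterM focal assign ks A x,
      fullInit (stratM ps assign) h
        = (fun b => |1 - (if b then (1:ℝ) else 0) - (ps i0).init|) (h focal)
          * ∏ i, ∏ j ∈ blk focal assign i,
              (fun j b => |1 - (if b then (1:ℝ) else 0) - (ps (assign j)).init|) j (h j) := by
    intro h _
    rw [fullInit, prod_split focal assign
      (fun j => |1 - (if h j then (1:ℝ) else 0) - (stratM ps assign j).init|)]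
    simp only [stratM, hassign]
  rw [Finset.sum_congr rfl hstep,
    cluster_sum focal assign ks A x (fun b => |1 - (if b then (1:ℝ) else 0) - (ps i0).init|)
      (fun j b => |1 - (if b then (1:ℝ) else 0) - (ps (assign j)).init|), redInitM]
  congr 1
  refine Finset.prod_congr rfl fun i _ => ?_
  have hq : ∀ T ∈ (blk focal assign i).powersetCard (x i : ℕ),
      (∏ j ∈ blk focal assign i,
        (if j ∈ T then |1 - (if true then (1:ℝ) else 0) - (ps (assign j)).init|
         else |1 - (if false then (1:ℝ) else 0) - (ps (assign j)).init|))
      = ∏ j ∈ blk focal assign i,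
          (if j ∈ T then (ps i).init else (1 - (ps i).init)) := by
    intro T _
    refine Finset.prod_congr rfl fun j hj => ?_
    have hja := (mem_blk.mp hj).2
    obtain ⟨⟨hp0, hp1⟩, -⟩ := hps i
    rw [hja]
    by_cases hT : j ∈ T
    · rw [if_pos hT, if_pos hT, abs_one_sub_ite true _ hp0 hp1, if_pos rfl]
    · rw [if_neg hT, if_neg hT, abs_one_sub_ite false _ hp0 hp1, if_neg (by simp)]
  rw [Finset.sum_congr rfl hq, aux_hom_sum, hcard i]

lemma trans_sum {n m : ℕ} (ps : Fin m → Mem1) (ks : Fin m → ℕ) (i0 : Fin m)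
    (focal : Fin n) (assign : Fin n → Fin m)
    (hps : ∀ i, (ps i).valid) (hassign : assign focal = i0)
    (hcard : ∀ i, (blk focal assign i).card = ks i)
    {A : Bool} {x : (i : Fin m) → Fin (ks i + 1)} {h : FullState n}
    (hh : h ∈ clusterM focal assign ks A x)
    (A' : Bool) (x' : (i : Fin m) → Fin (ks i + 1)) :
    ∑ h' ∈ clusterM focal assign ks A' x', fullM (stratM ps assign) h h'
      = redMM ps ks i0 (A, x) (A', x') := by
  obtain ⟨hfoc, hcnt⟩ := mem_clusterM.mp hh
  have hnc := nCoop_cluster hh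
  set S := ∑ i, (x i : ℕ) with hS
  -- the per-player factor
  set q : Fin n → Bool → ℝ := fun j b =>
    if b then (stratM ps assign j).cond (h j) (nCoop h - if h j then 1 else 0)
    else 1 - (stratM ps assign j).cond (h j) (nCoop h - if h j then 1 else 0) with hq
  have hsplit : ∀ h' ∈ clusterM focal assign ks A' x',
      fullM (stratM ps assign) h h'
        = (fun b => if b then (ps i0).cond A S else 1 - (ps i0).cond A S) (h' focal)
          * ∏ i, ∏ j ∈ blk focal assign i, q j (h' j) := by
    intro h' _
    show (∏ j, q j (h' j)) = _
    rw [prod_split focal assign (fun j => q j (h' j))]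
    have harg : nCoop h - (if A = true then 1 else 0) = S := by
      rw [hnc]; cases A <;> simp
    congr 2
    simp only [hq, stratM, hassign, hfoc, harg]
  rw [Finset.sum_congr rfl hsplit,
    cluster_sum focal assign ks A' x'
      (fun b => if b then (ps i0).cond A S else 1 - (ps i0).cond A S) q, redMM]
  simp only [Matrix.of_apply]
  congr 1
  · obtain ⟨-, hc⟩ := hps i0
    obtain ⟨hc0, hc1⟩ := hc A S
    rw [abs_one_sub_ite A' _ hc0 hc1]
  · refine Finset.prod_congr rfl fun i _ => ?_
    set pc := (ps i).cond true (nCoop h - 1) with hpc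
    set pd := (ps i).cond false (nCoop h) with hpd
    have hconv : ∀ T ∈ (blk focal assign i).powersetCard (x' i : ℕ),
        (∏ j ∈ blk focal assign i, (if j ∈ T then q j true else q j false))
        = ∏ j ∈ blk focal assign i,
            (if j ∈ T then (if h j then pc else pd) else (1 - if h j then pc else pd)) := by
      intro T _
      refine Finset.prod_congr rfl fun j hj => ?_
      have hja := (mem_blk.mp hj).2
      have hqj : q j true = (if h j then pc else pd) := by
        simp only [hq, stratM, hja, if_pos]
        by_cases hhj : h j = true
        · simp [hhj, hpc]
        · have : h j = false := Bool.not_eq_true _ |>.mp hhj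
          simp [this, hpd]
      have hqj' : q j false = 1 - (if h j then pc else pd) := by
        simp only [hq, stratM, hja]
        by_cases hhj : h j = true
        · simp [hhj, hpc]
        · have : h j = false := Bool.not_eq_true _ |>.mp hhj
          simp [this, hpd]
      by_cases hT : j ∈ T
      · rw [if_pos hT, if_pos hT, hqj]
      · rw [if_neg hT, if_neg hT, hqj']
    rw [Finset.sum_congr rfl hconv, aux_block_sum (blk focal assign i) h pc pd (x' i : ℕ),
      hcnt i, hcard i]
    have e1 : nCoop h - 1 = S + (if A then 1 else 0) - 1 := by rw [hnc]
    have e2 : nCoop h = S + (if A then 1 else 0) := hnc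
    rw [hpc, hpd, e1, e2]


/-! ### Stochastic matrices -/

def IsStoch {α : Type*} [Fintype α] (T : Matrix α α ℝ) : Prop :=
  (∀ a b, 0 ≤ T a b) ∧ ∀ a, ∑ b, T a b = 1

lemma isStoch_one {α : Type*} [Fintype α] [DecidableEq α] : IsStoch (1 : Matrix α α ℝ) := by
  constructor
  · intro a b
    rw [Matrix.one_apply]
    split <;> norm_num
  · intro a
    simp [Matrix.one_apply]

lemma isStoch_mul {α : Type*} [Fintype α] {P Q : Matrix α α ℝ}
    (hP : IsStoch P) (hQ : IsStoch Q) : IsStoch (P * Q) := by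
  constructor
  · intro a b
    rw [Matrix.mul_apply]
    exact Finset.sum_nonneg fun c _ => mul_nonneg (hP.1 a c) (hQ.1 c b)
  · intro a
    simp only [Matrix.mul_apply]
    rw [Finset.sum_comm]
    calc ∑ c, ∑ b, P a c * Q c b = ∑ c, P a c * ∑ b, Q c b := by
          simp [Finset.mul_sum]
      _ = 1 := by simp only [hQ.2]; simp [hP.2 a]

lemma isStoch_pow {α : Type*} [Fintype α] [DecidableEq α] {T : Matrix α α ℝ}
    (hT : IsStoch T) (t : ℕ) : IsStoch (T ^ t) := by
  induction t with
  | zero => rw [pow_zero]; exact isStoch_one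
  | succ t ih => rw [pow_succ]; exact isStoch_mul ih hT

lemma isStoch_entry_le_one {α : Type*} [Fintype α] {T : Matrix α α ℝ}
    (hT : IsStoch T) (a b : α) : T a b ≤ 1 := by
  have h := Finset.single_le_sum (f := fun c => T a c) (fun c _ => hT.1 a c) (Finset.mem_univ b)
  rw [hT.2 a] at h
  exact h

lemma vecMul_abs_le {α : Type*} [Fintype α] (w : α → ℝ) {T : Matrix α α ℝ}
    (hT : IsStoch T) (j : α) : |(w ᵥ* T) j| ≤ ∑ a, |w a| := by
  have hexp : (w ᵥ* T) j = ∑ a, w a * T a j := by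
    simp [Matrix.vecMul, dotProduct]
  rw [hexp]
  calc |∑ a, w a * T a j| ≤ ∑ a, |w a * T a j| := Finset.abs_sum_le_sum_abs _ _
    _ ≤ ∑ a, |w a| := by
        refine Finset.sum_le_sum fun a _ => ?_
        rw [abs_mul, abs_of_nonneg (hT.1 a j)]
        calc |w a| * T a j ≤ |w a| * 1 :=
              mul_le_mul_of_nonneg_left (isStoch_entry_le_one hT a j) (abs_nonneg (w a))
          _ = |w a| := mul_one (|w a|)

lemma summable_disc {α : Type*} [Fintype α] [DecidableEq α] {δ : ℝ}
    (hδ0 : 0 ≤ δ) (hδ1 : δ < 1) (w : α → ℝ) {T : Matrix α α ℝ} (hT : IsStoch T) (j : α) :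
    Summable (fun t : ℕ => δ ^ t * (w ᵥ* T ^ t) j) := by
  apply Summable.of_norm_bounded (g := fun t => (∑ a, |w a|) * δ ^ t)
  · exact (summable_geometric_of_lt_one hδ0 hδ1).mul_left _
  · intro t
    rw [Real.norm_eq_abs, abs_mul, abs_pow, abs_of_nonneg hδ0, mul_comm]
    exact mul_le_mul_of_nonneg_right (vecMul_abs_le w (isStoch_pow hT t) j)
      (pow_nonneg hδ0 t)

lemma fullM_isStoch {n : ℕ} (strat : Fin n → Mem1) (hps : ∀ j, (strat j).valid) :
    IsStoch (fullM strat) := by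
  constructor
  · intro h h'
    show (0:ℝ) ≤ ∏ j, (if h' j then (strat j).cond (h j) (nCoop h - if h j then 1 else 0)
      else 1 - (strat j).cond (h j) (nCoop h - if h j then 1 else 0))
    refine Finset.prod_nonneg fun j _ => ?_
    obtain ⟨-, hc⟩ := hps j
    obtain ⟨hc0, hc1⟩ := hc (h j) (nCoop h - if h j then 1 else 0)
    by_cases hj : h' j = true
    · rw [if_pos hj]; exact hc0
    · rw [if_neg hj]; linarith
  · intro h
    have : ∑ h' : FullState n, fullM strat h h'
        = ∑ h' ∈ Fintype.piFinset (fun _ : Fin n => (Finset.univ : Finset Bool)),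
            ∏ j, (if h' j then (strat j).cond (h j) (nCoop h - if h j then 1 else 0)
              else 1 - (strat j).cond (h j) (nCoop h - if h j then 1 else 0)) := by
      rw [Fintype.piFinset_univ]
      rfl
    have hexp := Finset.prod_univ_sum (t := fun _ : Fin n => (Finset.univ : Finset Bool))
      (f := fun j b => (if b then (strat j).cond (h j) (nCoop h - if h j then 1 else 0)
        else 1 - (strat j).cond (h j) (nCoop h - if h j then 1 else 0)))
    rw [this, ← hexp]
    have : ∀ j : Fin n, (∑ b : Bool,
        (if b then (strat j).cond (h j) (nCoop h - if h j then 1 else 0)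
          else 1 - (strat j).cond (h j) (nCoop h - if h j then 1 else 0))) = 1 := by
      intro j
      rw [Fintype.sum_bool]
      simp
    rw [Finset.prod_congr rfl fun j _ => this j, Finset.prod_const_one]

lemma cluster_nonempty {n m : ℕ} {focal : Fin n} {assign : Fin n → Fin m} {ks : Fin m → ℕ}
    (hcard : ∀ i, (blk focal assign i).card = ks i)
    (A : Bool) (x : (i : Fin m) → Fin (ks i + 1)) :
    (clusterM focal assign ks A x).Nonempty := by
  have hex : ∀ i, ∃ t ⊆ blk focal assign i, t.card = (x i : ℕ) := by
    intro i
    refine Finset.exists_subset_card_eq ?_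
    rw [hcard i]
    exact Nat.lt_succ_iff.mp (x i).isLt
  choose t ht hc using hex
  refine ⟨fun j => if j = focal then A else decide (j ∈ t (assign j)), ?_⟩
  rw [mem_clusterM]
  have hkey : ∀ i, (blk focal assign i).filter
      (fun j => (if j = focal then A else decide (j ∈ t (assign j))) = true) = t i := by
    intro i
    ext j
    simp only [Finset.mem_filter, mem_blk]
    constructor
    · rintro ⟨⟨hjf, hja⟩, hj2⟩
      rw [if_neg hjf, decide_eq_true_eq, hja] at hj2
      exact hj2
    · intro hj
      have hjb := mem_blk.mp (ht i hj)
      refine ⟨hjb, ?_⟩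
      rw [if_neg hjb.1, hjb.2, decide_eq_true_eq]
      exact hj
  refine ⟨by simp, fun i => ?_⟩
  rw [hkey i, hc i]

lemma redMM_isStoch {n m : ℕ} (ps : Fin m → Mem1) (ks : Fin m → ℕ) (i0 : Fin m)
    (focal : Fin n) (assign : Fin n → Fin m)
    (hps : ∀ i, (ps i).valid) (hassign : assign focal = i0)
    (hcard : ∀ i, (blk focal assign i).card = ks i) :
    IsStoch (redMM ps ks i0) := by
  have hvalid : ∀ j, (stratM ps assign j).valid := fun j => hps (assign j)
  have hfull := fullM_isStoch (stratM ps assign) hvalid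
  constructor
  · rintro ⟨A, x⟩ ⟨A', x'⟩
    obtain ⟨h, hh⟩ := cluster_nonempty hcard A x
    rw [← trans_sum ps ks i0 focal assign hps hassign hcard hh A' x']
    exact Finset.sum_nonneg fun h' _ => hfull.1 h h'
  · rintro ⟨A, x⟩
    obtain ⟨h, hh⟩ := cluster_nonempty hcard A x
    have h1 : ∀ s' : RStateM ks, redMM ps ks i0 (A, x) s'
        = ∑ h' ∈ clusterM focal assign ks s'.1 s'.2, fullM (stratM ps assign) h h' := by
      rintro ⟨A', x'⟩
      exact (trans_sum ps ks i0 focal assign hps hassign hcard hh A' x').symm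
    rw [Finset.sum_congr rfl fun s' _ => h1 s',
      sum_clusters hcard (fullM (stratM ps assign) h)]
    exact hfull.2 h

/-! ### The distribution at time `t` aggregates over clusters -/

lemma step_t {n m : ℕ} (ps : Fin m → Mem1) (ks : Fin m → ℕ) (i0 : Fin m)
    (focal : Fin n) (assign : Fin n → Fin m)
    (hps : ∀ i, (ps i).valid) (hassign : assign focal = i0)
    (hcard : ∀ i, (blk focal assign i).card = ks i) (t : ℕ) :
    ∀ (A : Bool) (x : (i : Fin m) → Fin (ks i + 1)),
      (redInitM ps ks i0 ᵥ* (redMM ps ks i0) ^ t) (A, x)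
        = ∑ h ∈ clusterM focal assign ks A x,
            (fullInit (stratM ps assign) ᵥ* (fullM (stratM ps assign)) ^ t) h := by
  induction t with
  | zero =>
    intro A x
    rw [pow_zero, pow_zero, Matrix.vecMul_one, Matrix.vecMul_one]
    exact (init_sum ps ks i0 focal assign hps hassign hcard A x).symm
  | succ t ih =>
    intro A x
    rw [pow_succ, pow_succ, ← Matrix.vecMul_vecMul, ← Matrix.vecMul_vecMul]
    have hlhs : (redInitM ps ks i0 ᵥ* (redMM ps ks i0) ^ t ᵥ* redMM ps ks i0) (A, x)
        = ∑ s : RStateM ks, (redInitM ps ks i0 ᵥ* (redMM ps ks i0) ^ t) s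
            * redMM ps ks i0 s (A, x) := by
      simp [Matrix.vecMul, dotProduct]
    have hrhs : ∀ h' : FullState n,
        (fullInit (stratM ps assign) ᵥ* (fullM (stratM ps assign)) ^ t
          ᵥ* fullM (stratM ps assign)) h'
        = ∑ h : FullState n, (fullInit (stratM ps assign) ᵥ* (fullM (stratM ps assign)) ^ t) h
            * fullM (stratM ps assign) h h' := by
      intro h'
      simp [Matrix.vecMul, dotProduct]
    rw [hlhs, Finset.sum_congr rfl fun h' _ => hrhs h', Finset.sum_comm]
    have hswap : ∀ h : FullState n,
        (∑ h' ∈ clusterM focal assign ks A x,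
          (fullInit (stratM ps assign) ᵥ* (fullM (stratM ps assign)) ^ t) h
            * fullM (stratM ps assign) h h')
        = (fullInit (stratM ps assign) ᵥ* (fullM (stratM ps assign)) ^ t) h
            * ∑ h' ∈ clusterM focal assign ks A x, fullM (stratM ps assign) h h' := by
      intro h
      rw [Finset.mul_sum]
    rw [Finset.sum_congr rfl fun h _ => hswap h,
      ← sum_clusters hcard (fun h => (fullInit (stratM ps assign)
        ᵥ* (fullM (stratM ps assign)) ^ t) h
          * ∑ h' ∈ clusterM focal assign ks A x, fullM (stratM ps assign) h h')]
    refine Finset.sum_congr rfl fun s _ => ?_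
    have hinner : ∀ h ∈ clusterM focal assign ks s.1 s.2,
        (fullInit (stratM ps assign) ᵥ* (fullM (stratM ps assign)) ^ t) h
            * ∑ h' ∈ clusterM focal assign ks A x, fullM (stratM ps assign) h h'
        = (fullInit (stratM ps assign) ᵥ* (fullM (stratM ps assign)) ^ t) h
            * redMM ps ks i0 s (A, x) := by
      intro h hh
      rw [trans_sum ps ks i0 focal assign hps hassign hcard hh A x]
    rw [Finset.sum_congr rfl hinner, ← Finset.sum_mul, ← ih s.1 s.2]

/-- The discounted mean distribution of the `m`-strategy reduced chain
aggregates the discounted mean distribution of the full chain over each cluster. -/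
theorem state_clustering_discounted_m (n m : ℕ) (hn : 2 ≤ n) (hm : 1 ≤ m)
    (ps : Fin m → Mem1) (hps : ∀ i, (ps i).valid)
    (ks : Fin m → ℕ) (hks : ∑ i, ks i = n - 1) (i0 : Fin m)
    (focal : Fin n) (hfocal : (focal : ℕ) = 0)
    (assign : Fin n → Fin m) (hassign : assign focal = i0)
    (hcard : ∀ i, (Finset.univ.filter fun j => j ≠ focal ∧ assign j = i).card = ks i)
    (δ : ℝ) (hδ0 : 0 < δ) (hδ1 : δ < 1) :
    ∀ (A : Bool) (x : (i : Fin m) → Fin (ks i + 1)),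
      discMean δ (redInitM ps ks i0) (redMM ps ks i0) (A, x)
        = ∑ h ∈ clusterM focal assign ks A x,
            discMean δ (fullInit (stratM ps assign)) (fullM (stratM ps assign)) h := by
  intro A x
  have hfull := fullM_isStoch (stratM ps assign) (fun j => hps (assign j))
  unfold discMean
  rw [← Finset.mul_sum]
  congr 1
  have h1 : ∀ t : ℕ, δ ^ t * (redInitM ps ks i0 ᵥ* redMM ps ks i0 ^ t) (A, x)
      = ∑ h ∈ clusterM focal assign ks A x,
          δ ^ t * (fullInit (stratM ps assign) ᵥ* fullM (stratM ps assign) ^ t) h := by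
    intro t
    rw [step_t ps ks i0 focal assign hps hassign hcard t A x, Finset.mul_sum]
  rw [tsum_congr h1]
  exact Summable.tsum_finsetSum (fun h _ => summable_disc hδ0.le hδ1 (fullInit (stratM ps assign)) hfull h)
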